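/- Let B be a separable unital C*-algebra with stable rank one. Then for every x in the ultrapower B_ω there exists a unitary u ∈ B_ω with x = u|x|, and consequently B_ω has stable rank one. -/

import Mathlib

/-!
Common definitions for formalizing "Nuclear dimension and 𝒵-stability"
(Sato–White–Winter).  All C⋆-algebras are complex.  See the comments on the
individual definitions for the intended mathematical meaning.
-/

open scoped Topology BoundedContinuousFunction NNReal ENNReal ZeroAtInfty Kronecker Matrix.Norms.L2Operator

noncomputable section

namespace SWW

/-- Matrix algebras `Mₙ(ℂ)` as C⋆-algebras, with the operator norm coming from the
scoped instances `Matrix.L2OpNorm`. -/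
noncomputable instance matrixCStarAlgebra (n : ℕ) : CStarAlgebra (Matrix (Fin n) (Fin n) ℂ) := by
  constructor

/-- An element of a C⋆-algebra (or a ⋆-ring) is positive iff it is of the form `star y * y`;
we use this purely algebraic characterisation of positivity. -/
def IsPos {A : Type*} [Mul A] [Star A] (x : A) : Prop := ∃ y : A, x = star y * y

/-- A linear map between C⋆-algebras is completely positive iff
`∑ i j, star (b i) * φ (star (a i) * a j) * (b j)` is positive for all finite
families `(a i)` in `A`, `(b i)` in `B`.  This is the standard characterisation of
complete positivity. -/
def IsCompletelyPositive {A B : Type*} [NonUnitalCStarAlgebra A] [NonUnitalCStarAlgebra B]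
    (φ : A →ₗ[ℂ] B) : Prop :=
  ∀ (n : ℕ) (a : Fin n → A) (b : Fin n → B),
    IsPos (∑ i : Fin n, ∑ j : Fin n, star (b i) * φ (star (a i) * a j) * b j)

/-- Completely positive and contractive (c.p.c.). -/
def IsCPC {A B : Type*} [NonUnitalCStarAlgebra A] [NonUnitalCStarAlgebra B]
    (φ : A →ₗ[ℂ] B) : Prop :=
  IsCompletelyPositive φ ∧ ∀ a : A, ‖φ a‖ ≤ ‖a‖

/-- A map is order zero if it preserves orthogonality of positive elements. -/
def IsOrderZero {A B : Type*} [NonUnitalCStarAlgebra A] [NonUnitalCStarAlgebra B]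
    (φ : A →ₗ[ℂ] B) : Prop :=
  ∀ x y : A, IsPos x → IsPos y → x * y = 0 → φ x * φ y = 0

/-- Order zero on a subset (typically a C⋆-subalgebra). -/
def IsOrderZeroOn {A B : Type*} [NonUnitalCStarAlgebra A] [NonUnitalCStarAlgebra B]
    (φ : A →ₗ[ℂ] B) (s : Set A) : Prop :=
  ∀ x ∈ s, ∀ y ∈ s, IsPos x → IsPos y → x * y = 0 → φ x * φ y = 0

/-- A tracial state on a unital C⋆-algebra, as a linear functional:
unital, positive and tracial.  (Positive unital functionals are automatically
states, i.e. of norm one.) -/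
def IsTracialState {A : Type*} [CStarAlgebra A] (τ : A →ₗ[ℂ] ℂ) : Prop :=
  τ 1 = 1 ∧ (∀ a : A, ∃ r : ℝ, 0 ≤ r ∧ τ (star a * a) = r) ∧
    ∀ a b : A, τ (a * b) = τ (b * a)

/-- `A` has exactly one tracial state. -/
def HasUniqueTracialState (A : Type*) [CStarAlgebra A] : Prop :=
  ∃! τ : A →ₗ[ℂ] ℂ, IsTracialState τ

/-- An extremal tracial state: an extreme point of the tracial state space. -/
def IsExtremalTracialState {A : Type*} [CStarAlgebra A] (τ : A →ₗ[ℂ] ℂ) : Prop :=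
  IsTracialState τ ∧
    ∀ (τ₁ τ₂ : A →ₗ[ℂ] ℂ) (t : ℝ), IsTracialState τ₁ → IsTracialState τ₂ →
      0 < t → t < 1 → τ = (t : ℂ) • τ₁ + ((1 - t : ℝ) : ℂ) • τ₂ → τ₁ = τ₂

/-- A C⋆-algebra is simple if it is nonzero and has no closed two-sided ideals other
than `0` and the whole algebra. -/
def IsSimpleCStarAlgebra (A : Type*) [CStarAlgebra A] : Prop :=
  Nontrivial A ∧ ∀ I : TwoSidedIdeal A, IsClosed (I : Set A) → I = ⊥ ∨ I = ⊤

/-- A unital C⋆-algebra has stable rank one if its invertible elements are dense. -/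
def HasStableRankOne (A : Type*) [CStarAlgebra A] : Prop :=
  Dense {x : A | IsUnit x}

/-- A unital C⋆-algebra is stably finite iff every isometry in every matrix algebra over it
is a unitary. -/
def IsStablyFinite (A : Type*) [CStarAlgebra A] : Prop :=
  ∀ (n : ℕ) (v : Matrix (Fin n) (Fin n) A), star v * v = 1 → v * star v = 1

/-- A unital C⋆-algebra is non-elementary iff it is not ⋆-isomorphic to a (full) matrix
algebra.  (A unital elementary C⋆-algebra is a full matrix algebra.) -/
def IsNonElementary (A : Type*) [CStarAlgebra A] : Prop :=
  ∀ n : ℕ, IsEmpty (A ≃⋆ₐ[ℂ] Matrix (Fin n) (Fin n) ℂ)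

/-- A unital C⋆-algebra has no elementary quotients iff it admits no surjective
⋆-homomorphism onto a (full) matrix algebra.  (Quotients of unital C⋆-algebras are unital,
and unital elementary C⋆-algebras are exactly the full matrix algebras.) -/
def HasNoElementaryQuotients (A : Type*) [CStarAlgebra A] : Prop :=
  ∀ (n : ℕ) (φ : A →⋆ₐ[ℂ] Matrix (Fin (n + 1)) (Fin (n + 1)) ℂ), ¬ Function.Surjective φ

/-- A bundled finite dimensional C⋆-algebra. -/
structure FinDimCStarAlgebra : Type 1 where
  carrier : Type
  [cstar : CStarAlgebra carrier]
  [findim : FiniteDimensional ℂ carrier]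

attribute [instance] FinDimCStarAlgebra.cstar FinDimCStarAlgebra.findim

instance : CoeSort FinDimCStarAlgebra Type := ⟨FinDimCStarAlgebra.carrier⟩

/-- `A` has nuclear dimension at most `d`:  completely positive approximations of the
identity through finite dimensional C⋆-algebras `F = F⁰ ⊕ ⋯ ⊕ F^d` with c.p.c. downward
maps and upward maps which are c.p.c. order zero on each summand.  (Here the approximation
is recorded summandwise, which is equivalent.) -/
def NuclearDimLE (A : Type*) [CStarAlgebra A] (d : ℕ) : Prop :=
  ∀ (s : Finset A) (ε : ℝ), 0 < ε →
    ∃ (F : Fin (d + 1) → FinDimCStarAlgebra)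
      (ψ : ∀ j, A →ₗ[ℂ] (F j : Type)) (φ : ∀ j, (F j : Type) →ₗ[ℂ] A),
      (∀ j, IsCPC (ψ j)) ∧ (∀ j, IsCPC (φ j) ∧ IsOrderZero (φ j)) ∧
      ∀ a ∈ s, ‖(∑ j, φ j (ψ j a)) - a‖ < ε

/-- A C⋆-algebra is nuclear iff its identity map is a point-norm limit of c.p.c. maps
factoring through finite dimensional C⋆-algebras. -/
def IsNuclear (A : Type*) [CStarAlgebra A] : Prop :=
  ∀ (s : Finset A) (ε : ℝ), 0 < ε →
    ∃ (F : FinDimCStarAlgebra) (ψ : A →ₗ[ℂ] (F : Type)) (φ : (F : Type) →ₗ[ℂ] A),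
      IsCPC ψ ∧ IsCPC φ ∧ ∀ a ∈ s, ‖φ (ψ a) - a‖ < ε

/-- A linear map `θ : A → B` between C⋆-algebras is nuclear if it is a point-norm limit of
c.p.c. maps factoring through finite dimensional C⋆-algebras. -/
def IsNuclearMap {A B : Type*} [CStarAlgebra A] [CStarAlgebra B] (θ : A →ₗ[ℂ] B) : Prop :=
  ∀ (s : Finset A) (ε : ℝ), 0 < ε →
    ∃ (F : FinDimCStarAlgebra) (ψ : A →ₗ[ℂ] (F : Type)) (φ : (F : Type) →ₗ[ℂ] B),
      IsCPC ψ ∧ IsCPC φ ∧ ∀ a ∈ s, ‖φ (ψ a) - θ a‖ < ε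

/-- Exactness, in the form of nuclear embeddability: there is an injective unital
⋆-homomorphism of `A` into some C⋆-algebra which is a nuclear map. -/
def IsExact (A : Type*) [CStarAlgebra A] : Prop :=
  ∃ (N : Type) (_ : CStarAlgebra N) (ι : A →⋆ₐ[ℂ] N),
    Function.Injective ι ∧ IsNuclearMap (ι : A →⋆ₐ[ℂ] N).toLinearMap

/-!  ### Ultrapowers and sequence algebras  -/

/-- Data realising `Aω` as the ultrapower `A_ω = ℓ^∞(A)/c_ω(A)` of `A` along the
(free) ultrafilter `ω`:  a surjective unital ⋆-homomorphism from the bounded sequences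
`ℓ^∞(A) = (ℕ →ᵇ A)` whose kernel is exactly `c_ω(A)`. -/
structure UltrapowerData (ω : Ultrafilter ℕ) (A Aω : Type*) [CStarAlgebra A]
    [CStarAlgebra Aω] where
  π : (ℕ →ᵇ A) →⋆ₐ[ℂ] Aω
  surjective : Function.Surjective π
  ker : ∀ x : ℕ →ᵇ A, π x = 0 ↔ Filter.Tendsto (fun n => ‖x n‖) ω (𝓝 0)

/-- The canonical copy of `A` inside the ultrapower, via constant sequences. -/
def UltrapowerData.incl {ω : Ultrafilter ℕ} {A Aω : Type*} [CStarAlgebra A] [CStarAlgebra Aω]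
    (U : UltrapowerData ω A Aω) (a : A) : Aω :=
  U.π (BoundedContinuousFunction.const ℕ a)

/-- Membership in the trace-kernel ideal `J_{A,τ} ⊲ A_ω` of the tracial state `τ`:
`x` is represented by a bounded sequence `(x_n)` with `lim_{n→ω} τ(x_n⋆ x_n) = 0`. -/
def UltrapowerData.InTraceKernel {ω : Ultrafilter ℕ} {A Aω : Type*} [CStarAlgebra A]
    [CStarAlgebra Aω] (U : UltrapowerData ω A Aω) (τ : A →ₗ[ℂ] ℂ) (x : Aω) : Prop :=
  ∃ f : ℕ →ᵇ A, U.π f = x ∧ Filter.Tendsto (fun n => ‖τ (star (f n) * f n)‖) ω (𝓝 0)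

/-- `Ψ : A_ω → B_ω` is the map induced by the (uniformly bounded) sequence of maps
`ψ_n : A → B`, i.e. it is given on representative sequences by `(x_n) ↦ (ψ_n (x_n))`. -/
def Induces {ω : Ultrafilter ℕ} {A Aω B Bω : Type*} [CStarAlgebra A] [CStarAlgebra Aω]
    [CStarAlgebra B] [CStarAlgebra Bω] (UA : UltrapowerData ω A Aω)
    (UB : UltrapowerData ω B Bω) (ψ : ℕ → A →ₗ[ℂ] B) (Ψ : Aω →ₗ[ℂ] Bω) : Prop :=
  ∀ (x : ℕ →ᵇ A) (y : ℕ →ᵇ B), (∀ n, y n = ψ n (x n)) → Ψ (UA.π x) = UB.π y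

/-- Data realising `Q` as the sequence algebra `ℓ^∞(A)/c₀(A)`. -/
structure SeqAlgebraData (A Q : Type*) [CStarAlgebra A] [CStarAlgebra Q] where
  π : (ℕ →ᵇ A) →⋆ₐ[ℂ] Q
  surjective : Function.Surjective π
  ker : ∀ x : ℕ →ᵇ A, π x = 0 ↔ Filter.Tendsto (fun n => ‖x n‖) Filter.atTop (𝓝 0)

/-- The canonical copy of `A` inside `ℓ^∞(A)/c₀(A)`, via constant sequences. -/
def SeqAlgebraData.incl {A Q : Type*} [CStarAlgebra A] [CStarAlgebra Q]
    (U : SeqAlgebraData A Q) (a : A) : Q :=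
  U.π (BoundedContinuousFunction.const ℕ a)

/-!  ### Tensor products

`TensorEmbedding A B T` realises `T` as a C⋆-completion of the algebraic tensor product
`A ⊗ B` of the unital C⋆-algebras `A` and `B`:  commuting unital embeddings of `A` and `B`
into `T` which are jointly injective on the algebraic tensor product and have jointly dense
linear span.  `IsMinimal` additionally states that the identity on the algebraic tensor
product extends to a ⋆-homomorphism from any other C⋆-completion to `T`; this says exactly
that the norm on `T` is the minimal (= spatial) C⋆-norm, so a minimal `TensorEmbedding A B T`
realises `T` as the spatial tensor product `A ⊗ B`.  -/

structure TensorEmbedding (A B T : Type*) [CStarAlgebra A] [CStarAlgebra B]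
    [CStarAlgebra T] where
  left : A →⋆ₐ[ℂ] T
  right : B →⋆ₐ[ℂ] T
  commutes : ∀ (a : A) (b : B), left a * right b = right b * left a
  injective' : ∀ (n : ℕ) (a : Fin n → A) (b : Fin n → B), LinearIndependent ℂ b →
    (∑ i, left (a i) * right (b i)) = 0 → ∀ i, a i = 0
  dense' : Dense ((Submodule.span ℂ {x : T | ∃ a b, x = left a * right b} : Submodule ℂ T) : Set T)

/-- The elementary tensor `a ⊗ b` inside the realisation `T` of `A ⊗ B`. -/
def TensorEmbedding.tmul {A B T : Type*} [CStarAlgebra A] [CStarAlgebra B] [CStarAlgebra T]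
    (t : TensorEmbedding A B T) (a : A) (b : B) : T :=
  t.left a * t.right b

/-- `T` carries the minimal (spatial) C⋆-norm:  any other C⋆-completion of `A ⊗ B`
maps onto `T` compatibly with the embeddings. -/
def TensorEmbedding.IsMinimal {A B T : Type*} [CStarAlgebra A] [CStarAlgebra B] [CStarAlgebra T]
    (t : TensorEmbedding A B T) : Prop :=
  ∀ (S : Type) [CStarAlgebra S], ∀ s : TensorEmbedding A B S,
    ∃ φ : S →⋆ₐ[ℂ] T, (∀ a, φ (s.left a) = t.left a) ∧ ∀ b, φ (s.right b) = t.right b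

/-- `A` tensorially absorbs `U`, i.e. `A ≅ A ⊗ U` (spatial tensor product). -/
def TensorAbsorbs (A U : Type*) [CStarAlgebra A] [CStarAlgebra U] : Prop :=
  ∃ (T : Type) (_ : CStarAlgebra T) (t : TensorEmbedding A U T),
    t.IsMinimal ∧ Nonempty (A ≃⋆ₐ[ℂ] T)

/-- The analogous notion of a C⋆-completion of the tensor product for non-unital
C⋆-algebras (used for cones `C₀(0,1] ⊗ A`). -/
structure NUTensorEmbedding (A B T : Type*) [NonUnitalCStarAlgebra A] [NonUnitalCStarAlgebra B]
    [NonUnitalCStarAlgebra T] where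
  left : A →⋆ₙₐ[ℂ] T
  right : B →⋆ₙₐ[ℂ] T
  commutes : ∀ (a : A) (b : B), left a * right b = right b * left a
  injective' : ∀ (n : ℕ) (a : Fin n → A) (b : Fin n → B), LinearIndependent ℂ b →
    (∑ i, left (a i) * right (b i)) = 0 → ∀ i, a i = 0
  dense' : Dense ((Submodule.span ℂ {x : T | ∃ a b, x = left a * right b} : Submodule ℂ T) : Set T)

/-!  ### Dimension drop algebras, the Jiang–Su algebra, UHF algebras -/

/-- The underlying set of the dimension drop algebra
`Z_{p,q} = {f ∈ C([0,1], M_p ⊗ M_q) : f(0) ∈ M_p ⊗ 1, f(1) ∈ 1 ⊗ M_q}`. -/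
def dimDropSet (p q : ℕ) : Set C(unitInterval, Matrix (Fin p × Fin q) (Fin p × Fin q) ℂ) :=
  {f | (∃ a : Matrix (Fin p) (Fin p) ℂ, f 0 = a ⊗ₖ (1 : Matrix (Fin q) (Fin q) ℂ)) ∧
      ∃ b : Matrix (Fin q) (Fin q) ℂ, f 1 = (1 : Matrix (Fin p) (Fin p) ℂ) ⊗ₖ b}

/-- The dimension drop algebra `Z_{p,q}`, as a ⋆-subalgebra of `C([0,1], M_p ⊗ M_q)`
(identifying `M_p ⊗ M_q = M_{pq}` via the Kronecker product). -/
def DimDrop (p q : ℕ) :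
    StarSubalgebra ℂ C(unitInterval, Matrix (Fin p × Fin q) (Fin p × Fin q) ℂ) where
  carrier := dimDropSet p q
  mul_mem' := by
    rintro f g ⟨⟨a, ha⟩, b, hb⟩ ⟨⟨a', ha'⟩, b', hb'⟩
    constructor
    · exact ⟨a * a', by simp [ha, ha', ← Matrix.mul_kronecker_mul]⟩
    · exact ⟨b * b', by simp [hb, hb', ← Matrix.mul_kronecker_mul]⟩
  one_mem' :=
    ⟨⟨1, by simp [Matrix.one_kronecker_one]⟩, ⟨1, by simp [Matrix.one_kronecker_one]⟩⟩
  add_mem' := by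
    rintro f g ⟨⟨a, ha⟩, b, hb⟩ ⟨⟨a', ha'⟩, b', hb'⟩
    exact ⟨⟨a + a', by simp [ha, ha', Matrix.add_kronecker]⟩,
      ⟨b + b', by simp [hb, hb', Matrix.kronecker_add]⟩⟩
  zero_mem' :=
    ⟨⟨0, by simp [Matrix.zero_kronecker]⟩, ⟨0, by simp [Matrix.kronecker_zero]⟩⟩
  algebraMap_mem' := by
    intro c
    refine ⟨⟨c • 1, ?_⟩, ⟨c • 1, ?_⟩⟩ <;>
      simp [Algebra.algebraMap_eq_smul_one, Matrix.smul_kronecker, Matrix.kronecker_smul,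
        Matrix.one_kronecker_one]
  star_mem' := by
    rintro f ⟨⟨a, ha⟩, b, hb⟩
    refine ⟨⟨star a, ?_⟩, ⟨star b, ?_⟩⟩
    · show star f 0 = _
      rw [ContinuousMap.star_apply, ha]
      show (Matrix.kroneckerMap (· * ·) a 1).conjTranspose = _
      ext ⟨i, j⟩ ⟨k, l⟩
      simp only [Matrix.conjTranspose_apply, Matrix.kroneckerMap_apply, Matrix.one_apply,
        apply_ite, map_zero, map_one, mul_ite, mul_one, mul_zero, ite_mul, one_mul, zero_mul]
      split <;> simp_all [eq_comm]
    · show star f 1 = _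
      rw [ContinuousMap.star_apply, hb]
      show (Matrix.kroneckerMap (· * ·) 1 b).conjTranspose = _
      ext ⟨i, j⟩ ⟨k, l⟩
      simp only [Matrix.conjTranspose_apply, Matrix.kroneckerMap_apply, Matrix.one_apply,
        apply_ite, map_zero, map_one, mul_ite, mul_one, mul_zero, ite_mul, one_mul, zero_mul]
      split <;> simp_all [eq_comm]

/-- `Z` is a Jiang–Su algebra: a simple, separable, unital, monotracial C⋆-algebra which
is an inductive limit of prime dimension drop algebras (presented as an increasing union
of unital ⋆-subalgebras, each ⋆-isomorphic to a prime dimension drop algebra, with dense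
union).  By the Jiang–Su uniqueness theorem this characterises `𝒵` up to isomorphism. -/
def IsJiangSu (Z : Type*) [CStarAlgebra Z] : Prop :=
  IsSimpleCStarAlgebra Z ∧ TopologicalSpace.SeparableSpace Z ∧ HasUniqueTracialState Z ∧
    ∃ S : ℕ → StarSubalgebra ℂ Z,
      (∀ n, S n ≤ S (n + 1)) ∧ Dense (⋃ n, (S n : Set Z)) ∧
      ∀ n, ∃ p q : ℕ, 0 < p ∧ 0 < q ∧ Nat.Coprime p q ∧
        Nonempty ((S n) ≃⋆ₐ[ℂ] (DimDrop p q))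

/-- `A` is 𝒵-stable, i.e. `A ≅ A ⊗ 𝒵` (spatial tensor product). -/
def IsZStable (A : Type*) [CStarAlgebra A] : Prop :=
  ∃ (Z : Type) (_ : CStarAlgebra Z), IsJiangSu Z ∧ TensorAbsorbs A Z

/-- `U` is a UHF algebra: a unital inductive limit of full matrix algebras, presented as
an increasing union of unital ⋆-subalgebras, each ⋆-isomorphic to a full matrix algebra,
with dense union. -/
def IsUHF (U : Type*) [CStarAlgebra U] : Prop :=
  ∃ S : ℕ → StarSubalgebra ℂ U,
    (∀ n, S n ≤ S (n + 1)) ∧ Dense (⋃ n, (S n : Set U)) ∧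
    ∀ n, ∃ k : ℕ, 0 < k ∧ Nonempty ((S n) ≃⋆ₐ[ℂ] Matrix (Fin k) (Fin k) ℂ)

/-- A UHF algebra of infinite type: `U ≅ U ⊗ U`. -/
def IsUHFOfInfiniteType (U : Type*) [CStarAlgebra U] : Prop :=
  IsUHF U ∧ TensorAbsorbs U U

/-!  ### Stabilisations, Cuntz comparison, quasitraces and strict comparison -/

/-- The upper-left corner embedding `M_n(D) → M_m(D)` for `n ≤ m`. -/
def matIncl {D : Type*} {n m : ℕ} (_ : n ≤ m) (x : Matrix (Fin n) (Fin n) D)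
    [Zero D] : Matrix (Fin m) (Fin m) D :=
  fun i j => if hi : (i : ℕ) < n then (if hj : (j : ℕ) < n then x ⟨i, hi⟩ ⟨j, hj⟩ else 0) else 0

/-- Data realising `T` as the stabilisation `D ⊗ 𝒦` of `D`:  `T` is the inductive limit
of the matrix algebras `M_n(D)` along the upper-left corner embeddings, via compatible
injective ⋆-homomorphisms with jointly dense range. -/
structure StabilizationOf (D T : Type*) [CStarAlgebra D] [NonUnitalCStarAlgebra T] where
  ι : ∀ n : ℕ, Matrix (Fin n) (Fin n) D →⋆ₙₐ[ℂ] T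
  injective : ∀ n, Function.Injective (ι n)
  compatible : ∀ (n : ℕ) (x : Matrix (Fin n) (Fin n) D),
    ι (n + 1) (matIncl (Nat.le_succ n) x) = ι n x
  dense' : Dense (⋃ n, Set.range (ι n))

/-- Cuntz subequivalence `a ≾ b` in a C⋆-algebra: `a` is a limit of elements `v⋆ b v`. -/
def CuntzLE {T : Type*} [NonUnitalCStarAlgebra T] (a b : T) : Prop :=
  ∀ ε : ℝ, 0 < ε → ∃ v : T, ‖star v * b * v - a‖ < ε

/-- Cuntz equivalence. -/
def CuntzEquiv {T : Type*} [NonUnitalCStarAlgebra T] (a b : T) : Prop :=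
  CuntzLE a b ∧ CuntzLE b a

/-- A lower semicontinuous `2`-quasitrace on a (typically stable) C⋆-algebra `T`, as a
`[0,∞]`-valued function on `T` (only its values on the positive cone matter):
it vanishes at `0`, satisfies the trace identity `τ(x⋆x) = τ(xx⋆)`, is additive on
commuting positive elements, is `ℝ≥0`-homogeneous, is lower semicontinuous on the positive
cone, and extends to a quasitrace on `M₂(T)`. -/
structure IsLsc2Quasitrace {T : Type*} [NonUnitalCStarAlgebra T] [PartialOrder T]
    [StarOrderedRing T] (τ : T → ℝ≥0∞) : Prop where
  map_zero : τ 0 = 0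
  flip : ∀ x : T, τ (star x * x) = τ (x * star x)
  add_commuting : ∀ x y : T, 0 ≤ x → 0 ≤ y → x * y = y * x → τ (x + y) = τ x + τ y
  smul : ∀ (r : ℝ≥0) (x : T), 0 ≤ x → τ (r • x) = r * τ x
  lsc : LowerSemicontinuousOn τ {x : T | 0 ≤ x}
  two_quasitrace : ∃ τ₂ : Matrix (Fin 2) (Fin 2) T → ℝ≥0∞,
    (∀ x : Matrix (Fin 2) (Fin 2) T, τ₂ (star x * x) = τ₂ (x * star x)) ∧
    (∀ x y : Matrix (Fin 2) (Fin 2) T, IsPos x → IsPos y → x * y = y * x →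
      τ₂ (x + y) = τ₂ x + τ₂ y) ∧
    ∀ x : T, 0 ≤ x → τ₂ (Matrix.single 0 0 x) = τ x

/-- `d` is the value `d_τ(a) = lim_{k→∞} τ(a^{1/k})` of the dimension function induced
by the quasitrace `τ` at the positive element `a`. -/
def IsDimValue {T : Type*} [NonUnitalCStarAlgebra T] [PartialOrder T] [StarOrderedRing T]
    (τ : T → ℝ≥0∞) (a : T) (d : ℝ≥0∞) : Prop :=
  Filter.Tendsto (fun k : ℕ => τ (CFC.nnrpow a ((k + 1 : ℝ≥0))⁻¹)) Filter.atTop (𝓝 d)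

/-- Strict comparison for a (simple) unital C⋆-algebra `D`:  in the stabilisation
`D ⊗ 𝒦`, whenever `a, b` are nonzero positive elements with
`lim_k τ(a^{1/k}) < lim_k τ(b^{1/k})` for every lower semicontinuous `2`-quasitrace,
then `a ≾ b`. -/
def HasStrictComparison (D : Type*) [CStarAlgebra D] : Prop :=
  ∀ (T : Type) [NonUnitalCStarAlgebra T] [PartialOrder T] [StarOrderedRing T],
    ∀ _ : StabilizationOf D T, ∀ a b : T, 0 ≤ a → 0 ≤ b → a ≠ 0 → b ≠ 0 →
      (∀ τ : T → ℝ≥0∞, IsLsc2Quasitrace τ →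
        ∃ da db : ℝ≥0∞, IsDimValue τ a da ∧ IsDimValue τ b db ∧ da < db) →
      CuntzLE a b

/-- The Cuntz semigroup `Cu(D) = (D ⊗ 𝒦)₊/∼` is almost unperforated:
`(n+1)·⟨a⟩ ≤ n·⟨b⟩` implies `⟨a⟩ ≤ ⟨b⟩`.  Multiples are expressed via sums of pairwise
orthogonal Cuntz-equivalent copies in the stabilisation. -/
def CuAlmostUnperforated (D : Type*) [CStarAlgebra D] : Prop :=
  ∀ (T : Type) [NonUnitalCStarAlgebra T] [PartialOrder T] [StarOrderedRing T],
    ∀ _ : StabilizationOf D T, ∀ a b : T, 0 ≤ a → 0 ≤ b → ∀ n : ℕ,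
      (∃ (a' : Fin (n + 1) → T) (b' : Fin n → T),
        (∀ i, 0 ≤ a' i) ∧ (∀ j, 0 ≤ b' j) ∧
        (∀ i, CuntzEquiv (a' i) a) ∧ (∀ j, CuntzEquiv (b' j) b) ∧
        (∀ i i', i ≠ i' → a' i * a' i' = 0) ∧ (∀ j j', j ≠ j' → b' j * b' j' = 0) ∧
        CuntzLE (∑ i, a' i) (∑ j, b' j)) →
      CuntzLE a b

/-- Cuntz subequivalence between matrices over `D` of possibly different sizes, inside
`⋃_k M_k(D) ⊆ D ⊗ 𝒦`.  (Smallness is measured entrywise, which on matrices of a fixed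
size is equivalent to the C⋆-norm.) -/
def MatCuntzLE {D : Type*} [CStarAlgebra D] {n m : ℕ} (a : Matrix (Fin n) (Fin n) D)
    (b : Matrix (Fin m) (Fin m) D) : Prop :=
  ∀ ε : ℝ, 0 < ε → ∃ (k : ℕ) (hn : n ≤ k) (hm : m ≤ k) (v : Matrix (Fin k) (Fin k) D),
    ∀ i j, ‖(star v * matIncl hm b * v - matIncl hn a) i j‖ < ε

/-- Cuntz equivalence between matrices over `D`. -/
def MatCuntzEquiv {D : Type*} [CStarAlgebra D] {n m : ℕ} (a : Matrix (Fin n) (Fin n) D)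
    (b : Matrix (Fin m) (Fin m) D) : Prop :=
  MatCuntzLE a b ∧ MatCuntzLE b a

/-!  ### `C₀(0,1]`, quasidiagonality -/

/-- The C⋆-algebra `C₀(0,1]`. -/
abbrev C01 := ZeroAtInftyContinuousMap (Set.Ioc (0 : ℝ) 1) ℂ

/-- A (not necessarily unital) C⋆-algebra is quasidiagonal if there is a net of c.p.c. maps
into full matrix algebras which is asymptotically multiplicative and asymptotically
isometric. -/
def IsQuasidiagonal (C : Type*) [NonUnitalCStarAlgebra C] : Prop :=
  ∀ (s : Finset C) (ε : ℝ), 0 < ε →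
    ∃ (k : ℕ) (φ : C →ₗ[ℂ] Matrix (Fin k) (Fin k) ℂ),
      IsCPC φ ∧ (∀ x ∈ s, ∀ y ∈ s, ‖φ (x * y) - φ x * φ y‖ < ε) ∧
      ∀ x ∈ s, ‖x‖ - ε ≤ ‖φ x‖

/-!  ### Flips and strong self-absorption -/

/-- `A` has approximately inner flip:  on any realisation `T` of the spatial tensor
product `A ⊗ A`, the flip `a ⊗ b ↦ b ⊗ a` is a point-norm limit of inner automorphisms. -/
def HasApproxInnerFlip (A : Type*) [CStarAlgebra A] : Prop :=
  ∀ (T : Type) [CStarAlgebra T], ∀ t : TensorEmbedding A A T, t.IsMinimal →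
    ∀ (s : Finset (A × A)) (ε : ℝ), 0 < ε → ∃ u ∈ unitary T,
      ∀ p ∈ s, ‖u * t.tmul p.1 p.2 * star u - t.tmul p.2 p.1‖ < ε

/-- `D` is strongly self-absorbing: `D ≇ ℂ` is separable, unital, and there is an
isomorphism `D ≅ D ⊗ D` which is approximately unitarily equivalent to the first factor
embedding `d ↦ d ⊗ 1`. -/
def IsStronglySelfAbsorbing (D : Type*) [CStarAlgebra D] : Prop :=
  TopologicalSpace.SeparableSpace D ∧ IsEmpty (D ≃⋆ₐ[ℂ] ℂ) ∧
    ∃ (T : Type) (_ : CStarAlgebra T) (t : TensorEmbedding D D T), t.IsMinimal ∧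
      ∃ θ : D ≃⋆ₐ[ℂ] T, ∀ (s : Finset D) (ε : ℝ), 0 < ε → ∃ u ∈ unitary T,
        ∀ d ∈ s, ‖u * t.left d * star u - θ d‖ < ε


section SWWAux
set_option linter.unusedSectionVars false
namespace SWWAux

variable {A : Type*} [CStarAlgebra A] [PartialOrder A] [StarOrderedRing A]

lemma norm_one_le : ‖(1 : A)‖ ≤ 1 := by
  have h : ‖(1 : A)‖ * ‖(1 : A)‖ = ‖(1 : A)‖ := by
    calc ‖(1 : A)‖ * ‖(1 : A)‖ = ‖star (1 : A) * 1‖ := (CStarRing.norm_star_mul_self).symm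
    _ = ‖(1 : A)‖ := by simp
  nlinarith [norm_nonneg (1 : A)]

lemma unitary_norm_le {u : A} (hu : u ∈ unitary A) : ‖u‖ ≤ 1 := by
  have h1 : star u * u = 1 := (Unitary.mem_iff.mp hu).1
  have h : ‖u‖ * ‖u‖ = ‖(1 : A)‖ := by rw [← CStarRing.norm_star_mul_self, h1]
  nlinarith [norm_nonneg u, norm_one_le (A := A)]

lemma norm_sqrt (a : A) (ha : 0 ≤ a) : ‖CFC.sqrt a‖ = Real.sqrt ‖a‖ := by
  have hs : 0 ≤ CFC.sqrt a := CFC.sqrt_nonneg _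
  have hsa : star (CFC.sqrt a) = CFC.sqrt a := IsSelfAdjoint.of_nonneg hs
  have h : ‖CFC.sqrt a‖ * ‖CFC.sqrt a‖ = ‖a‖ := by
    rw [← CStarRing.norm_star_mul_self, hsa, CFC.sqrt_mul_sqrt_self a ha]
  conv_lhs => rw [← Real.sqrt_mul_self (norm_nonneg (CFC.sqrt a))]
  rw [h]

lemma norm_sqrt_star_mul_self (x : A) : ‖CFC.sqrt (star x * x)‖ = ‖x‖ := by
  rw [norm_sqrt _ (star_mul_self_nonneg x), CStarRing.norm_star_mul_self,
    Real.sqrt_mul_self (norm_nonneg x)]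

lemma sqrt_eq_real_cfc (a : A) (ha : 0 ≤ a) : CFC.sqrt a = cfc Real.sqrt a := by
  rw [CFC.sqrt_eq_cfc, cfc_nnreal_eq_real (ha := ha)]
  apply cfc_congr
  intro x hx
  have hx' : (0:ℝ) ≤ x := spectrum_nonneg_of_nonneg ha hx
  simp only
  rw [Real.coe_sqrt, Real.coe_toNNReal x hx']

lemma spec_subset (a : A) (ha : 0 ≤ a) {M : ℝ} (haM : ‖a‖ ≤ M) :
    spectrum ℝ a ⊆ Set.Icc 0 M := by
  rcases subsingleton_or_nontrivial A with h | h
  · intro x hx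
    exact absurd hx (by simp [spectrum, Set.eq_empty_iff_forall_notMem,
      resolventSet, isUnit_of_subsingleton] <;> exact Subsingleton.elim _ _)
  haveI : NormOneClass A := ⟨CStarRing.norm_one⟩
  intro x hx
  refine ⟨spectrum_nonneg_of_nonneg ha hx, ?_⟩
  have h1 : ‖x‖ ≤ ‖a‖ := spectrum.norm_le_norm_of_mem hx
  rw [Real.norm_eq_abs] at h1
  exact (le_abs_self x).trans (h1.trans haM)

lemma norm_pow_le_of_le {b : A} {M : ℝ} (hM : 1 ≤ M) (hb : ‖b‖ ≤ M) (n : ℕ) :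
    ‖b ^ n‖ ≤ M ^ n := by
  induction n with
  | zero => simpa using norm_one_le (A := A)
  | succ n ih =>
    calc ‖b ^ (n+1)‖ = ‖b * b ^ n‖ := by rw [pow_succ']
    _ ≤ ‖b‖ * ‖b ^ n‖ := norm_mul_le _ _
    _ ≤ M * M ^ n := by
        apply mul_le_mul hb ih (norm_nonneg _) (zero_le_one.trans hM)
    _ = M ^ (n+1) := by rw [pow_succ']

lemma pow_diff_bound (a b : A) {M : ℝ} (hM : 1 ≤ M) (ha : ‖a‖ ≤ M) (hb : ‖b‖ ≤ M) (i : ℕ) :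
    ‖a ^ i - b ^ i‖ ≤ i * M ^ i * ‖a - b‖ := by
  induction i with
  | zero => simp
  | succ n ih =>
    have key : a ^ (n+1) - b ^ (n+1) = a * (a ^ n - b ^ n) + (a - b) * b ^ n := by
      rw [pow_succ', pow_succ']; noncomm_ring
    have e1 : ‖a * (a ^ n - b ^ n)‖ ≤ M * (n * M ^ n * ‖a - b‖) :=
      (norm_mul_le _ _).trans
        (mul_le_mul ha ih (norm_nonneg _) (zero_le_one.trans hM))
    have e2 : ‖(a - b) * b ^ n‖ ≤ ‖a - b‖ * M ^ n :=
      (norm_mul_le _ _).trans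
        (mul_le_mul_of_nonneg_left (norm_pow_le_of_le hM hb n) (norm_nonneg _))
    have h3 : M ^ n ≤ M ^ (n + 1) := pow_le_pow_right₀ hM (Nat.le_succ n)
    have h4 : (0:ℝ) ≤ M ^ n := by positivity
    calc ‖a ^ (n+1) - b ^ (n+1)‖ ≤ ‖a * (a ^ n - b ^ n)‖ + ‖(a - b) * b ^ n‖ := by
          rw [key]; exact norm_add_le _ _
    _ ≤ M * (n * M ^ n * ‖a - b‖) + ‖a - b‖ * M ^ n := add_le_add e1 e2
    _ = ((n : ℝ) * M ^ (n+1)) * ‖a - b‖ + M ^ n * ‖a - b‖ := by ring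
    _ ≤ ((n : ℝ) * M ^ (n+1)) * ‖a - b‖ + M ^ (n+1) * ‖a - b‖ := by
        have := mul_le_mul_of_nonneg_right h3 (norm_nonneg (a - b))
        linarith
    _ = (n + 1 : ℕ) * M ^ (n + 1) * ‖a - b‖ := by push_cast; ring

lemma aeval_diff_bound (p : Polynomial ℝ) (a b : A) {M : ℝ} (hM : 1 ≤ M)
    (ha : ‖a‖ ≤ M) (hb : ‖b‖ ≤ M) :
    ‖Polynomial.aeval a p - Polynomial.aeval b p‖ ≤
      (∑ i ∈ Finset.range (p.natDegree + 1), |p.coeff i| * (i * M ^ i)) * ‖a - b‖ := by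
  rw [Polynomial.aeval_eq_sum_range, Polynomial.aeval_eq_sum_range, ← Finset.sum_sub_distrib,
    Finset.sum_mul]
  refine (norm_sum_le _ _).trans (Finset.sum_le_sum fun i _ => ?_)
  rw [← smul_sub, norm_smul, Real.norm_eq_abs]
  calc |p.coeff i| * ‖a ^ i - b ^ i‖ ≤ |p.coeff i| * (i * M ^ i * ‖a - b‖) :=
        mul_le_mul_of_nonneg_left (pow_diff_bound a b hM ha hb i) (abs_nonneg _)
  _ = |p.coeff i| * (i * M ^ i) * ‖a - b‖ := by ring

lemma sqrt_ucont (ε M : ℝ) (hε : 0 < ε) (hM : 1 ≤ M) :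
    ∃ δ > 0, ∀ a b : A, 0 ≤ a → 0 ≤ b → ‖a‖ ≤ M → ‖b‖ ≤ M → ‖a - b‖ < δ →
      ‖CFC.sqrt a - CFC.sqrt b‖ < ε := by
  obtain ⟨p, hp⟩ := exists_polynomial_near_of_continuousOn 0 M Real.sqrt
    Real.continuous_sqrt.continuousOn (ε/3) (by positivity)
  set L := ∑ i ∈ Finset.range (p.natDegree + 1), |p.coeff i| * (i * M ^ i) with hL
  have hL0 : 0 ≤ L := Finset.sum_nonneg fun i _ => by positivity
  refine ⟨ε / (3 * (L + 1)), by positivity, fun a b ha hb haM hbM hab => ?_⟩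
  have key : ∀ c : A, 0 ≤ c → ‖c‖ ≤ M → ‖CFC.sqrt c - Polynomial.aeval c p‖ ≤ ε/3 := by
    intro c hc hcM
    have hsa : IsSelfAdjoint c := .of_nonneg hc
    rw [sqrt_eq_real_cfc c hc, ← cfc_polynomial p c hsa,
      ← cfc_sub (fun x : ℝ => Real.sqrt x) (fun x => p.eval x) c]
    refine norm_cfc_le (by positivity) fun x hx => ?_
    have := hp x (spec_subset c hc hcM hx)
    rw [Real.norm_eq_abs, abs_sub_comm]
    exact this.le
  have hmid : ‖Polynomial.aeval a p - Polynomial.aeval b p‖ < ε/3 := by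
    refine lt_of_le_of_lt (aeval_diff_bound p a b hM haM hbM) ?_
    have h1 : L * ‖a - b‖ ≤ L * (ε / (3 * (L + 1))) :=
      mul_le_mul_of_nonneg_left hab.le hL0
    have h2 : L * (ε / (3 * (L + 1))) < ε/3 := by
      have hL1 : L + 1 ≠ 0 := by positivity
      have heq : L * (ε / (3 * (L + 1))) = (L / (L + 1)) * (ε / 3) := by
        field_simp
      rw [heq]
      have hlt : L / (L + 1) < 1 := (div_lt_one (by linarith)).mpr (by linarith)
      nlinarith [hε]
    exact h1.trans_lt h2
  have t1 := key a ha haM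
  have t2 := key b hb hbM
  have hsplit : CFC.sqrt a - CFC.sqrt b =
      (CFC.sqrt a - Polynomial.aeval a p) + (Polynomial.aeval a p - Polynomial.aeval b p)
        + (Polynomial.aeval b p - CFC.sqrt b) := by abel
  calc ‖CFC.sqrt a - CFC.sqrt b‖
      ≤ ‖CFC.sqrt a - Polynomial.aeval a p‖ + ‖Polynomial.aeval a p - Polynomial.aeval b p‖
        + ‖Polynomial.aeval b p - CFC.sqrt b‖ := by rw [hsplit]; exact norm_add₃_le
  _ < ε := by rw [norm_sub_rev (Polynomial.aeval b p)] at *; linarith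

lemma polar_of_isUnit {y : A} (hy : IsUnit y) :
    ∃ u ∈ unitary A, y = u * CFC.sqrt (star y * y) := by
  have ha : (0:A) ≤ star y * y := star_mul_self_nonneg y
  set a := star y * y with ha_def
  set s := CFC.sqrt a with hs_def
  have hs0 : (0:A) ≤ s := CFC.sqrt_nonneg _
  have hss : s * s = a := CFC.sqrt_mul_sqrt_self a ha
  have hsa : star s = s := IsSelfAdjoint.of_nonneg hs0
  obtain ⟨z, hz1, hz2⟩ := isUnit_iff_exists.mp hy
  have hat : a * (z * star z) = 1 := by
    calc a * (z * star z) = star y * (y * z) * star z := by rw [ha_def]; noncomm_ring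
    _ = star (z * y) := by rw [hz1, mul_one, star_mul]
    _ = 1 := by rw [hz2, star_one]
  have hta : (z * star z) * a = 1 := by
    calc (z * star z) * a = z * (star z * star y) * y := by rw [ha_def]; noncomm_ring
    _ = z * star (y * z) * y := by rw [star_mul]
    _ = z * y := by rw [hz1, star_one, mul_one]
    _ = 1 := hz2
  set t := z * star z with ht_def
  have hts : t * s = s * t := by
    have h1 : s * a = a * s := by rw [← hss]; noncomm_ring
    calc t * s = t * s * (a * t) := by rw [hat, mul_one]
    _ = t * (s * a) * t := by noncomm_ring
    _ = t * (a * s) * t := by rw [h1]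
    _ = (t * a) * (s * t) := by noncomm_ring
    _ = s * t := by rw [hta, one_mul]
  have hsts : (s * t) * s = 1 := by rw [← hts, mul_assoc, hss, hta]
  have hstar_t : star t = t := by rw [ht_def, star_mul, star_star]
  have hsit : star (s * t) = s * t := by rw [star_mul, hstar_t, hsa, hts]
  have hsisi : (s * t) * (s * t) = t := by
    calc (s * t) * (s * t) = s * (t * s) * t := by noncomm_ring
    _ = s * (s * t) * t := by rw [hts]
    _ = (s * s) * (t * t) := by noncomm_ring
    _ = (a * t) * t := by rw [hss]; noncomm_ring
    _ = t := by rw [hat, one_mul]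
  refine ⟨y * (s * t), ?_, ?_⟩
  · rw [Unitary.mem_iff]
    constructor
    · have h5 : star (y * (s * t)) * (y * (s * t)) = (s * t) * (a * (s * t)) := by
        rw [star_mul, hsit, ha_def]; noncomm_ring
      rw [h5]
      calc (s * t) * (a * (s * t)) = (s * t) * (a * s) * t := by noncomm_ring
      _ = (s * t) * (s * a) * t := by rw [← hss]; noncomm_ring
      _ = (s * t) * s * (a * t) := by noncomm_ring
      _ = (s * t) * s := by rw [hat, mul_one]
      _ = 1 := hsts
    · have h6 : y * (s * t) * star (y * (s * t)) = y * ((s * t) * (s * t)) * star y := by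
        rw [star_mul, hsit]; noncomm_ring
      calc y * (s * t) * star (y * (s * t)) = y * ((s * t) * (s * t)) * star y := h6
      _ = y * t * star y := by rw [hsisi]
      _ = (y * z) * star (y * z) := by rw [ht_def, star_mul]; noncomm_ring
      _ = 1 := by rw [hz1, star_one, mul_one]
  · rw [mul_assoc, hsts, mul_one]

lemma approx_polar (hsr : Dense {w : A | IsUnit w}) (x : A) (ε : ℝ) (hε : 0 < ε) :
    ∃ u ∈ unitary A, ‖x - u * CFC.sqrt (star x * x)‖ < ε := by
  set M : ℝ := (‖x‖ + 1)^2 + 1 with hM_def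
  have hM : 1 ≤ M := by nlinarith [norm_nonneg x]
  obtain ⟨δ₀, hδ₀, hkey⟩ := sqrt_ucont (A := A) (ε/2) M (by positivity) hM
  set δ := min 1 (min (ε/2) (δ₀ / (2*‖x‖+2))) with hδ_def
  have hδ : 0 < δ :=
    lt_min one_pos (lt_min (by positivity) (by positivity))
  obtain ⟨y, hyb, hyu⟩ := Metric.dense_iff.mp hsr x δ hδ
  have hxy : ‖x - y‖ < δ := by
    rw [← dist_eq_norm, dist_comm]
    exact Metric.mem_ball.mp hyb
  have hδ1 : δ ≤ 1 := min_le_left _ _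
  have hδε : δ ≤ ε/2 := le_trans (min_le_right _ _) (min_le_left _ _)
  have hδ₀' : δ ≤ δ₀ / (2*‖x‖+2) := le_trans (min_le_right _ _) (min_le_right _ _)
  obtain ⟨u, hu, hyu_eq⟩ := polar_of_isUnit hyu
  have hny : ‖y‖ ≤ ‖x‖ + 1 := by
    have h := norm_sub_norm_le y x
    rw [norm_sub_rev] at h
    linarith
  have hd : ‖star x * x - star y * y‖ < δ₀ := by
    have hsplit : star x * x - star y * y = star x * (x - y) + star (x - y) * y := by
      rw [star_sub]; noncomm_ring
    have e1 : ‖star x * (x - y)‖ ≤ ‖x‖ * ‖x - y‖ := by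
      refine (norm_mul_le _ _).trans ?_
      rw [norm_star]
    have e2 : ‖star (x - y) * y‖ ≤ ‖x - y‖ * ‖y‖ := by
      refine (norm_mul_le _ _).trans ?_
      rw [norm_star]
    have hbound : ‖star x * x - star y * y‖ ≤ (2*‖x‖+1) * ‖x - y‖ := by
      rw [hsplit]
      refine (norm_add_le _ _).trans ?_
      nlinarith [norm_nonneg (x - y)]
    have h2 : (2*‖x‖+1) * ‖x - y‖ < (2*‖x‖+2) * δ := by
      have hp : (0:ℝ) < 2*‖x‖+1 := by positivity
      have := mul_lt_mul_of_pos_left hxy hp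
      nlinarith [hδ]
    have h3 : (2*‖x‖+2) * δ ≤ δ₀ := by
      have := (le_div_iff₀ (show (0:ℝ) < 2*‖x‖+2 by positivity)).mp hδ₀'
      linarith
    linarith
  have hsq : ‖CFC.sqrt (star y * y) - CFC.sqrt (star x * x)‖ < ε/2 := by
    refine hkey _ _ (star_mul_self_nonneg y) (star_mul_self_nonneg x) ?_ ?_ ?_
    · rw [CStarRing.norm_star_mul_self]
      nlinarith [norm_nonneg y]
    · rw [CStarRing.norm_star_mul_self]
      nlinarith [norm_nonneg x]
    · rw [norm_sub_rev]; exact hd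
  have hu1 : ‖u‖ ≤ 1 := unitary_norm_le hu
  refine ⟨u, hu, ?_⟩
  have hsplit2 : x - u * CFC.sqrt (star x * x) =
      (x - y) + u * (CFC.sqrt (star y * y) - CFC.sqrt (star x * x)) := by
    rw [mul_sub, ← hyu_eq]; abel
  calc ‖x - u * CFC.sqrt (star x * x)‖
      ≤ ‖x - y‖ + ‖u * (CFC.sqrt (star y * y) - CFC.sqrt (star x * x))‖ := by
        rw [hsplit2]; exact norm_add_le _ _
  _ ≤ ‖x - y‖ + ‖u‖ * ‖CFC.sqrt (star y * y) - CFC.sqrt (star x * x)‖ :=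
        add_le_add le_rfl (norm_mul_le _ _)
  _ < ε := by nlinarith [norm_nonneg (CFC.sqrt (star y * y) - CFC.sqrt (star x * x)), hsq, hxy]

end SWWAux
end SWWAux

/-- Unitary polar decomposition in ultrapowers.  If `B` is separable,
unital with stable rank one, every `x ∈ B_ω` has a unitary polar decomposition
`x = u * |x|`, and consequently `B_ω` has stable rank one.  (Here `|x|` is characterised
as the positive element whose square is `star x * x`.) -/
theorem statement6 (ω : Ultrafilter ℕ) (hfree : (ω : Filter ℕ) ≤ Filter.cofinite)
    (B Bω : Type) [CStarAlgebra B] [CStarAlgebra Bω]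
    (hsep : TopologicalSpace.SeparableSpace B) (hsr : HasStableRankOne B)
    (U : UltrapowerData ω B Bω) :
    (∀ x : Bω, ∃ u ∈ unitary Bω, ∃ m : Bω, IsPos m ∧ m * m = star x * x ∧ x = u * m) ∧
      HasStableRankOne Bω := by
  letI : PartialOrder B := CStarAlgebra.spectralOrder B
  haveI : StarOrderedRing B := CStarAlgebra.spectralOrderedRing B
  letI : PartialOrder Bω := CStarAlgebra.spectralOrder Bω
  haveI : StarOrderedRing Bω := CStarAlgebra.spectralOrderedRing Bω
  have hω : Filter.Tendsto (fun n : ℕ => 1/(n+1 : ℝ)) (ω : Filter ℕ) (nhds 0) :=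
    tendsto_one_div_add_atTop_nhds_zero_nat.mono_left (Nat.cofinite_eq_atTop ▸ hfree)
  have hpolar : ∀ x : Bω, ∃ u ∈ unitary Bω,
      ∃ m : Bω, IsPos m ∧ m * m = star x * x ∧ x = u * m := by
    intro x
    obtain ⟨f, rfl⟩ := U.surjective x
    have H : ∀ n : ℕ, ∃ u ∈ unitary B,
        ‖f n - u * CFC.sqrt (star (f n) * f n)‖ < 1/(n+1 : ℝ) :=
      fun n => SWWAux.approx_polar hsr (f n) _ (by positivity)
    choose uf hu hufn using H
    have hubd : ∀ n, ‖uf n‖ ≤ 1 := fun n => SWWAux.unitary_norm_le (hu n)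
    let useq : ℕ →ᵇ B := .ofNormedAddCommGroupDiscrete uf 1 hubd
    set mf : ℕ → B := fun n => CFC.sqrt (star (f n) * f n) with hmf_def
    have hmbd : ∀ n, ‖mf n‖ ≤ ‖f‖ := fun n => by
      rw [hmf_def]
      rw [SWWAux.norm_sqrt_star_mul_self]
      exact f.norm_coe_le_norm n
    let mseq : ℕ →ᵇ B := .ofNormedAddCommGroupDiscrete mf ‖f‖ hmbd
    set yf : ℕ → B := fun n => CFC.sqrt (mf n) with hyf_def
    have hybd : ∀ n, ‖yf n‖ ≤ Real.sqrt ‖f‖ := fun n => by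
      rw [hyf_def]
      rw [SWWAux.norm_sqrt _ (CFC.sqrt_nonneg _)]
      exact Real.sqrt_le_sqrt (hmbd n)
    let yseq : ℕ →ᵇ B := .ofNormedAddCommGroupDiscrete yf _ hybd
    refine ⟨U.π useq, ?_, U.π mseq, ⟨U.π yseq, ?_⟩, ?_, ?_⟩
    · rw [Unitary.mem_iff]
      constructor
      · rw [← map_star, ← map_mul, ← map_one U.π]
        congr 1
        ext n
        show star (uf n) * uf n = 1
        exact (Unitary.mem_iff.mp (hu n)).1
      · rw [← map_star, ← map_mul, ← map_one U.π]
        congr 1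
        ext n
        show uf n * star (uf n) = 1
        exact (Unitary.mem_iff.mp (hu n)).2
    · rw [← map_star, ← map_mul]
      congr 1
      ext n
      show mf n = star (yf n) * yf n
      have hy_sa : star (yf n) = yf n := IsSelfAdjoint.of_nonneg (CFC.sqrt_nonneg _)
      rw [hy_sa, hyf_def]
      exact (CFC.sqrt_mul_sqrt_self (mf n) (CFC.sqrt_nonneg _)).symm
    · rw [← map_mul, ← map_star, ← map_mul]
      congr 1
      ext n
      show mf n * mf n = star (f n) * f n
      rw [hmf_def]
      exact CFC.sqrt_mul_sqrt_self _ (star_mul_self_nonneg (f n))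
    · have hker : U.π (f - useq * mseq) = 0 := by
        rw [U.ker]
        refine squeeze_zero (fun n => norm_nonneg _) (fun n => ?_) hω
        show ‖f n - uf n * mf n‖ ≤ 1/(n+1 : ℝ)
        exact (hufn n).le
      rw [map_sub, map_mul, sub_eq_zero] at hker
      exact hker
  refine ⟨hpolar, ?_⟩
  refine Metric.dense_iff.mpr fun y r hr => ?_
  obtain ⟨u, hu, m, ⟨c, hc⟩, -, hym⟩ := hpolar y
  have hm0 : (0:Bω) ≤ m := hc ▸ star_mul_self_nonneg c
  set δ := r/2 with hδdef
  have hδ : 0 < δ := by positivity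
  have hmδ : IsUnit (m + (δ:ℂ) • 1) := by
    have hns : (-δ : ℂ) ∉ spectrum ℂ m := by
      intro hmem
      open ComplexOrder in
      have h0 : (0:ℂ) ≤ (-δ : ℂ) := spectrum_nonneg_of_nonneg hm0 hmem
      have h1 : (0:ℝ) ≤ -δ := by
        rwa [show (-δ : ℂ) = ((-δ : ℝ) : ℂ) by push_cast; ring, Complex.zero_le_real] at h0
      linarith
    have hiu := spectrum.notMem_iff.mp hns
    have heq : algebraMap ℂ Bω (-δ) - m = -(m + (δ:ℂ) • 1) := by
      rw [Algebra.algebraMap_eq_smul_one, neg_smul]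
      abel
    rwa [heq, IsUnit.neg_iff] at hiu
  have huu : IsUnit u := by
    obtain ⟨h1, h2⟩ := Unitary.mem_iff.mp hu
    exact ⟨⟨u, star u, h2, h1⟩, rfl⟩
  refine ⟨u * (m + (δ:ℂ) • 1), ⟨?_, huu.mul hmδ⟩⟩
  rw [Metric.mem_ball, dist_eq_norm]
  have hzy : u * (m + (δ:ℂ) • 1) - y = (δ:ℂ) • u := by
    rw [hym, mul_add, mul_smul_comm, mul_one]
    abel
  rw [hzy, norm_smul]
  have hnd : ‖(δ:ℂ)‖ = δ := by
    rw [Complex.norm_real, Real.norm_eq_abs, abs_of_pos hδ]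
  calc ‖(δ:ℂ)‖ * ‖u‖ ≤ δ * 1 := by
        rw [hnd]
        exact mul_le_mul_of_nonneg_left (SWWAux.unitary_norm_le hu) hδ.le
  _ < r := by rw [mul_one, hδdef]; linarith

end SWW
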